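/- Let H be a finite simple graph that contains at least one vertex of degree one. If m ≥ 2, then the bondage number of K_m ⊠ H satisfies b(K_m ⊠ H) ≤ ⌈3m/2⌉. -/

import Mathlib

open SimpleGraph Finset

/-- `D` is a dominating set of `G`: every vertex is in `D` or adjacent to a vertex of `D`. -/
def SimpleGraph.IsDominatingSet {V : Type*} (G : SimpleGraph V) (D : Set V) : Prop :=
  ∀ v : V, v ∈ D ∨ ∃ u ∈ D, G.Adj u v

/-- The domination number of a finite graph. -/
noncomputable def SimpleGraph.dominationNumber {V : Type*} [Fintype V]
    (G : SimpleGraph V) : ℕ :=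
  sInf {k | ∃ D : Finset V, D.card = k ∧ G.IsDominatingSet ↑D}

/-- The bondage number of a finite graph: the least size of a set of edges whose removal
increases the domination number. -/
noncomputable def SimpleGraph.bondageNumber {V : Type*} [Fintype V]
    (G : SimpleGraph V) : ℕ :=
  sInf {k | ∃ Z : Finset (Sym2 V), Z.card = k ∧ (↑Z : Set (Sym2 V)) ⊆ G.edgeSet ∧
    G.dominationNumber < (G.deleteEdges ↑Z).dominationNumber}

/-- The strong product of two simple graphs. -/
def SimpleGraph.strongProd {V W : Type*} (G : SimpleGraph V) (H : SimpleGraph W) :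
    SimpleGraph (V × W) :=
  SimpleGraph.fromRel (fun a b =>
    (a.1 = b.1 ∧ H.Adj a.2 b.2) ∨ (G.Adj a.1 b.1 ∧ a.2 = b.2) ∨
      (G.Adj a.1 b.1 ∧ H.Adj a.2 b.2))

infixl:70 " ⊠ " => SimpleGraph.strongProd

lemma domNum_le_card {V : Type*} [Fintype V] (G : SimpleGraph V) (D : Finset V)
    (hD : G.IsDominatingSet ↑D) : G.dominationNumber ≤ D.card :=
  Nat.sInf_le ⟨D, rfl, hD⟩

lemma exists_min_dom {V : Type*} [Fintype V] (G : SimpleGraph V) :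
    ∃ D : Finset V, D.card = G.dominationNumber ∧ G.IsDominatingSet ↑D := by
  have hne : {k | ∃ D : Finset V, D.card = k ∧ G.IsDominatingSet ↑D}.Nonempty :=
    ⟨Finset.univ.card, Finset.univ, rfl, fun v => Or.inl (by simp)⟩
  exact Nat.sInf_mem hne

lemma strongProd_adj_snd {V W : Type*} {G : SimpleGraph V} {H : SimpleGraph W}
    {a b : V × W} (h : (G ⊠ H).Adj a b) : a.2 = b.2 ∨ H.Adj a.2 b.2 := by
  rw [SimpleGraph.strongProd, SimpleGraph.fromRel_adj] at h
  rcases h with ⟨-, h | h⟩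
  · rcases h with ⟨-, h⟩ | ⟨-, h⟩ | ⟨-, h⟩
    exacts [Or.inr h, Or.inl h, Or.inr h]
  · rcases h with ⟨-, h⟩ | ⟨-, h⟩ | ⟨-, h⟩
    exacts [Or.inr h.symm, Or.inl h.symm, Or.inr h.symm]

/-- **Lemma.** Let `H` be a finite graph containing at least one vertex of degree one.
If `m ≥ 2`, then `b(K_m ⊠ H) ≤ ⌈3m/2⌉`. -/
theorem bondage_le_of_pendant {W : Type*} [Fintype W] (H : SimpleGraph W)
    [DecidableRel H.Adj] (hpend : ∃ v : W, H.degree v = 1)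
    (m : ℕ) (hm : 2 ≤ m) :
    ((⊤ : SimpleGraph (Fin m)) ⊠ H).bondageNumber ≤ (3 * m + 1) / 2 := by
  classical
  obtain ⟨v₀, hdeg⟩ := hpend
  obtain ⟨u₀, hu⟩ := Finset.card_eq_one.mp hdeg
  have hadj : H.Adj v₀ u₀ := by
    have : u₀ ∈ H.neighborFinset v₀ := by rw [hu]; exact Finset.mem_singleton_self u₀
    exact (SimpleGraph.mem_neighborFinset _ _ _).mp this
  have hN : ∀ x, H.Adj v₀ x → x = u₀ := fun x hx =>
    Finset.mem_singleton.mp (hu ▸ (SimpleGraph.mem_neighborFinset _ _ _).mpr hx)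
  have hne_uv : u₀ ≠ v₀ := fun h => H.irrefl (h ▸ hadj)
  have hm0 : 0 < m := by omega
  set G : SimpleGraph (Fin m × W) := (⊤ : SimpleGraph (Fin m)) ⊠ H with hG
  set f : Fin m → Fin m := fun i => if h : (i : ℕ) + 1 < m then ⟨(i : ℕ) + 1, h⟩
    else ⟨(i : ℕ) - 1, Nat.lt_of_le_of_lt (Nat.sub_le _ _) i.isLt⟩ with hf
  have hf_spec : ∀ i : Fin m, ((f i : ℕ) = (i : ℕ) + 1 ∧ (i : ℕ) + 1 < m) ∨
      ((f i : ℕ) = (i : ℕ) - 1 ∧ ¬ ((i : ℕ) + 1 < m)) := by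
    intro i
    simp only [hf]
    split
    · exact Or.inl ⟨rfl, by assumption⟩
    · exact Or.inr ⟨rfl, by assumption⟩
  have hf_ne : ∀ i : Fin m, f i ≠ i := by
    intro i h
    have h2 := congrArg Fin.val h
    have hi := i.isLt
    rcases hf_spec i with ⟨h3, h4⟩ | ⟨h3, h4⟩ <;> omega
  set Zv : Finset (Sym2 (Fin m × W)) :=
    (Finset.univ.filter (fun i : Fin m => (i : ℕ) % 2 = 0)).image
      (fun i => s((i, v₀), (f i, v₀))) with hZv
  set Zu : Finset (Sym2 (Fin m × W)) :=
    Finset.univ.image (fun i : Fin m => s((i, u₀), (i, v₀))) with hZu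
  set Z := Zv ∪ Zu with hZ
  -- cardinality bound
  have hcard_v : Zv.card ≤ (m + 1) / 2 := by
    refine le_trans Finset.card_image_le ?_
    have hle : (Finset.univ.filter (fun i : Fin m => (i : ℕ) % 2 = 0)).card
        ≤ (Finset.range ((m + 1) / 2)).card := by
      apply Finset.card_le_card_of_injOn (fun i : Fin m => (i : ℕ) / 2)
      · intro i hi
        have hiLt := i.isLt
        simp only [Finset.coe_filter, Finset.mem_coe, Finset.mem_filter, Finset.mem_univ, true_and, Set.mem_setOf_eq] at hi
        simp only [Finset.mem_coe, Finset.mem_range, Finset.coe_range, Set.mem_Iio]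
        omega
      · intro i hi j hj hij
        simp only [Finset.coe_filter, Finset.mem_univ, true_and, Set.mem_setOf_eq] at hi hj
        have hij' : (i : ℕ) / 2 = (j : ℕ) / 2 := hij
        exact Fin.ext (by omega)
    simpa using hle
  have hcard_u : Zu.card ≤ m := le_trans Finset.card_image_le (by simp)
  have hcardZ : Z.card ≤ (3 * m + 1) / 2 :=
    le_trans (Finset.card_union_le _ _) (by omega)
  -- coverage
  have hC2 : ∀ c : Fin m, s(((c : Fin m), u₀), (c, v₀)) ∈ Z := fun c =>
    Finset.mem_union_right _ (Finset.mem_image_of_mem _ (Finset.mem_univ c))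
  have hC1 : ∀ a : Fin m, ∃ j : Fin m, j ≠ a ∧ s(((a : Fin m), v₀), (j, v₀)) ∈ Z := by
    intro a
    have ha := a.isLt
    rcases Nat.even_or_odd (a : ℕ) with he | ho
    · have he' : (a : ℕ) % 2 = 0 := Nat.even_iff.mp he
      exact ⟨f a, hf_ne a, Finset.mem_union_left _
        (Finset.mem_image_of_mem _ (Finset.mem_filter.mpr ⟨Finset.mem_univ a, he'⟩))⟩
    · have ho' : (a : ℕ) % 2 = 1 := Nat.odd_iff.mp ho
      have h1 : (a : ℕ) - 1 < m := by omega
      refine ⟨⟨(a : ℕ) - 1, h1⟩, ?_, ?_⟩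
      · intro h
        have := congrArg Fin.val h
        simp only at this
        omega
      · have hfb : f ⟨(a : ℕ) - 1, h1⟩ = a := by
          rcases hf_spec ⟨(a : ℕ) - 1, h1⟩ with ⟨h3, h4⟩ | ⟨h3, h4⟩
          · exact Fin.ext (by simp only at h3 ⊢; omega)
          · exfalso; simp only at h4; omega
        have hmem : s(((⟨(a : ℕ) - 1, h1⟩ : Fin m), v₀), (f ⟨(a : ℕ) - 1, h1⟩, v₀)) ∈ Zv :=
          Finset.mem_image_of_mem _
            (Finset.mem_filter.mpr ⟨Finset.mem_univ _, by simp only; omega⟩)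
        rw [hfb] at hmem
        rw [Sym2.eq_swap]
        exact Finset.mem_union_left _ hmem
  -- Z consists of edges of G
  have hZsub : (↑Z : Set (Sym2 (Fin m × W))) ⊆ G.edgeSet := by
    intro e he
    simp only [Finset.mem_coe, hZ, Finset.mem_union, hZv, hZu, Finset.mem_image,
      Finset.mem_filter, Finset.mem_univ, true_and] at he
    rcases he with ⟨i, -, rfl⟩ | ⟨i, rfl⟩
    · rw [SimpleGraph.mem_edgeSet, hG, SimpleGraph.strongProd, SimpleGraph.fromRel_adj]
      refine ⟨fun h => hf_ne i (congrArg Prod.fst h).symm,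
        Or.inl (Or.inr (Or.inl ⟨?_, rfl⟩))⟩
      exact (SimpleGraph.top_adj i (f i)).mpr (fun h => hf_ne i h.symm)
    · rw [SimpleGraph.mem_edgeSet, hG, SimpleGraph.strongProd, SimpleGraph.fromRel_adj]
      exact ⟨fun h => hne_uv (congrArg Prod.snd h), Or.inl (Or.inl ⟨rfl, hadj.symm⟩)⟩
  -- γ(G) ≤ γ(H)
  set γH := H.dominationNumber with hγH
  set a₀ : Fin m := ⟨0, hm0⟩ with ha₀
  have hGle : G.dominationNumber ≤ γH := by
    obtain ⟨DH, hcard, hdom⟩ := exists_min_dom H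
    have hdomG : G.IsDominatingSet ↑(DH.image (fun w => ((a₀ : Fin m), w))) := by
      rintro ⟨i, w⟩
      rcases hdom w with hw | ⟨y, hy, hyw⟩
      · by_cases hia : i = a₀
        · subst hia
          exact Or.inl (Finset.mem_coe.mpr
            (Finset.mem_image_of_mem _ (Finset.mem_coe.mp hw)))
        · refine Or.inr ⟨(a₀, w), Finset.mem_coe.mpr
            (Finset.mem_image_of_mem _ (Finset.mem_coe.mp hw)), ?_⟩
          rw [hG, SimpleGraph.strongProd, SimpleGraph.fromRel_adj]
          exact ⟨fun h => hia (congrArg Prod.fst h).symm,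
            Or.inl (Or.inr (Or.inl ⟨(SimpleGraph.top_adj a₀ i).mpr (Ne.symm hia), rfl⟩))⟩
      · refine Or.inr ⟨(a₀, y), Finset.mem_coe.mpr
          (Finset.mem_image_of_mem _ (Finset.mem_coe.mp hy)), ?_⟩
        rw [hG, SimpleGraph.strongProd, SimpleGraph.fromRel_adj]
        by_cases hia : i = a₀
        · subst hia
          exact ⟨fun h => H.ne_of_adj hyw (congrArg Prod.snd h),
            Or.inl (Or.inl ⟨rfl, hyw⟩)⟩
        · exact ⟨fun h => hia (congrArg Prod.fst h).symm,
            Or.inl (Or.inr (Or.inr ⟨(SimpleGraph.top_adj a₀ i).mpr (Ne.symm hia), hyw⟩))⟩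
    refine le_trans (domNum_le_card G _ hdomG) (le_of_eq ?_)
    rw [Finset.card_image_of_injective _ (fun x y h => (Prod.ext_iff.mp h).2), hcard]
  -- the key inequality: γ(G) < γ(G - Z)
  set G' := G.deleteEdges ↑Z with hG'
  have hlt : G.dominationNumber < G'.dominationNumber := by
    refine lt_of_le_of_lt hGle ?_
    obtain ⟨D, hDcard, hDdom⟩ := exists_min_dom G'
    rw [← hDcard]
    by_contra hcon
    push_neg at hcon
    -- the projection dominates H
    have hproj : H.IsDominatingSet ↑(D.image Prod.snd) := by
      intro w
      rcases hDdom (a₀, w) with hw | ⟨d, hd, hdw⟩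
      · exact Or.inl (Finset.mem_coe.mpr
          (Finset.mem_image_of_mem _ (Finset.mem_coe.mp hw)))
      · have hGadj : G.Adj d (a₀, w) := by
          rw [hG', SimpleGraph.deleteEdges_adj] at hdw
          exact hdw.1
        rw [hG] at hGadj
        rcases strongProd_adj_snd hGadj with heq | hHadj
        · have heq' : d.2 = w := heq
          exact Or.inl (Finset.mem_coe.mpr (heq' ▸ Finset.mem_image_of_mem Prod.snd
            (Finset.mem_coe.mp hd)))
        · exact Or.inr ⟨d.2, Finset.mem_coe.mpr (Finset.mem_image_of_mem Prod.snd
            (Finset.mem_coe.mp hd)), hHadj⟩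
    have hHle : γH ≤ (D.image Prod.snd).card := domNum_le_card H _ hproj
    have himle : (D.image Prod.snd).card ≤ D.card := Finset.card_image_le
    have hcard_eq : (D.image Prod.snd).card = D.card :=
      le_antisymm himle (by omega)
    have hinj : Set.InjOn (Prod.snd : Fin m × W → W) ↑D := Finset.card_image_iff.mp hcard_eq
    -- second coordinate of any dominator of the pendant column
    have hsnd : ∀ (d : Fin m × W) (i : Fin m), G'.Adj d (i, v₀) → d.2 = v₀ ∨ d.2 = u₀ := by
      intro d i h
      rw [hG', SimpleGraph.deleteEdges_adj] at h
      have h1 := h.1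
      rw [hG] at h1
      rcases strongProd_adj_snd h1 with heq | hadj2
      · exact Or.inl heq
      · exact Or.inr (hN _ hadj2.symm)
    have hPQ : (∃ d ∈ (↑D : Set (Fin m × W)), d.2 = v₀) ∨
        (∃ d ∈ (↑D : Set (Fin m × W)), d.2 = u₀) := by
      rcases hDdom (a₀, v₀) with hw | ⟨d, hd, hdadj⟩
      · exact Or.inl ⟨(a₀, v₀), hw, rfl⟩
      · rcases hsnd d a₀ hdadj with h | h
        · exact Or.inl ⟨d, hd, h⟩
        · exact Or.inr ⟨d, hd, h⟩
    by_cases hP : ∃ d ∈ (↑D : Set (Fin m × W)), d.2 = v₀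
    · by_cases hQ : ∃ d ∈ (↑D : Set (Fin m × W)), d.2 = u₀
      · -- both u₀ and v₀ occur: contradiction with minimality of γ(H)
        obtain ⟨dv, hdv, hdv2⟩ := hP
        obtain ⟨du, hdu, hdu2⟩ := hQ
        have hvmem : v₀ ∈ D.image Prod.snd :=
          hdv2 ▸ Finset.mem_image_of_mem Prod.snd (Finset.mem_coe.mp hdv)
        have humem : u₀ ∈ D.image Prod.snd :=
          hdu2 ▸ Finset.mem_image_of_mem Prod.snd (Finset.mem_coe.mp hdu)
        have herase : H.IsDominatingSet ↑((D.image Prod.snd).erase v₀) := by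
          intro w
          rcases hproj w with hw | ⟨x, hx, hxw⟩
          · by_cases hwv : w = v₀
            · exact Or.inr ⟨u₀, Finset.mem_coe.mpr
                (Finset.mem_erase.mpr ⟨hne_uv, humem⟩), by rw [hwv]; exact hadj.symm⟩
            · exact Or.inl (Finset.mem_coe.mpr
                (Finset.mem_erase.mpr ⟨hwv, Finset.mem_coe.mp hw⟩))
          · by_cases hxv : x = v₀
            · have hwu : w = u₀ := hN w (by rw [← hxv]; exact hxw)
              refine Or.inl (Finset.mem_coe.mpr (Finset.mem_erase.mpr ?_))
              rw [hwu]
              exact ⟨hne_uv, humem⟩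
            · exact Or.inr ⟨x, Finset.mem_coe.mpr
                (Finset.mem_erase.mpr ⟨hxv, Finset.mem_coe.mp hx⟩), hxw⟩
        have h1 : γH ≤ ((D.image Prod.snd).erase v₀).card := domNum_le_card H _ herase
        have h2 : ((D.image Prod.snd).erase v₀).card = (D.image Prod.snd).card - 1 :=
          Finset.card_erase_of_mem hvmem
        have h3 : 0 < (D.image Prod.snd).card := Finset.card_pos.mpr ⟨v₀, hvmem⟩
        omega
      · -- only v₀ occurs
        obtain ⟨dv, hdv, hdv2⟩ := hP
        obtain ⟨j, hjne, hjZ⟩ := hC1 dv.1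
        have hdvp : dv = (dv.1, v₀) := by rw [← hdv2]
        rcases hDdom (j, v₀) with hw | ⟨e, he, headj⟩
        · have : (j, v₀) = dv := hinj hw hdv (by rw [hdv2])
          exact hjne (congrArg Prod.fst this)
        · rcases hsnd e j headj with hev | heu
          · have hedv : e = dv := hinj he hdv (by rw [hev, hdv2])
            rw [hedv] at headj
            rw [hG', SimpleGraph.deleteEdges_adj] at headj
            refine headj.2 ?_
            rw [hdvp]
            exact Finset.mem_coe.mpr hjZ
          · exact hQ ⟨e, he, heu⟩
    · by_cases hQ : ∃ d ∈ (↑D : Set (Fin m × W)), d.2 = u₀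
      · -- only u₀ occurs
        obtain ⟨du, hdu, hdu2⟩ := hQ
        have hdup : du = (du.1, u₀) := by rw [← hdu2]
        rcases hDdom (du.1, v₀) with hw | ⟨e, he, headj⟩
        · exact hP ⟨(du.1, v₀), hw, rfl⟩
        · rcases hsnd e du.1 headj with hev | heu
          · exact hP ⟨e, he, hev⟩
          · have hedu : e = du := hinj he hdu (by rw [heu, hdu2])
            rw [hedu] at headj
            rw [hG', SimpleGraph.deleteEdges_adj] at headj
            refine headj.2 ?_
            rw [hdup]
            exact Finset.mem_coe.mpr (hC2 du.1)
      · exact hPQ.elim hP hQ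
  -- conclude
  have hmem : Z.card ∈ {k | ∃ Z' : Finset (Sym2 (Fin m × W)), Z'.card = k ∧
      (↑Z' : Set (Sym2 (Fin m × W))) ⊆ G.edgeSet ∧
      G.dominationNumber < (G.deleteEdges ↑Z').dominationNumber} :=
    ⟨Z, rfl, hZsub, by rw [← hG']; exact hlt⟩
  exact le_trans (Nat.sInf_le hmem) hcardZ
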